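/- Let 𝒯 be the set of all (2,4)-types T such that G(T) ⊆ G(T₀) for at least one of the four types T₀ ∈ {({1̄,2̄,3̄,4̄},{1̄}), ({2̄,3̄,4̄},{1̄,2̄}), ({3̄,4̄},{1̄,2̄,3̄}), ({4̄},{1̄,2̄,3̄,4̄})}. Then 𝒯 is a generic (2,4)-tropical oriented matroid, the types T = ({2̄,4̄},{1̄}) and T' = ({4̄},{1̄,3̄}) belong to 𝒯, and removing all occurrences of 2̄ from the coordinates of T yields the same pair of sets as removing all occurrences of 3̄ from the coordinates of T' (namely ({4̄},{1̄})); nevertheless, the coordinatewise union T ∪ T' = ({2̄,4̄},{1̄,3̄}) is not a type of 𝒯. (This disproves Lemma 3.16 of Oh–Yoo.) -/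

import Mathlib

open Finset

/-- A bipartite graph between `α` and `β`, identified with its edge set. -/
abbrev BGraph (α β : Type*) := Finset (α × β)

section BipartiteDefs

variable {α β : Type*} [DecidableEq α] [DecidableEq β]

/-- Left degree vector. -/
def LD (G : BGraph α β) (a : α) : ℕ := (G.filter fun e => e.1 = a).card

/-- Right degree vector. -/
def RD (G : BGraph α β) (b : β) : ℕ := (G.filter fun e => e.2 = b).card

/-- The simple graph on `α ⊕ β` associated to a bipartite edge set. -/
def toGraph (G : BGraph α β) : SimpleGraph (α ⊕ β) :=
  SimpleGraph.fromRel fun x y => ∃ a b, x = Sum.inl a ∧ y = Sum.inr b ∧ (a, b) ∈ G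

/-- Acyclicity of a bipartite edge set. -/
def Acyclic (G : BGraph α β) : Prop := (toGraph G).IsAcyclic

/-- `U` is a tree on the vertex set `I ⊔ J`. -/
def IsTreeOn (U : BGraph α β) (I : Finset α) (J : Finset β) : Prop :=
  (∀ e ∈ U, e.1 ∈ I ∧ e.2 ∈ J) ∧ Acyclic U ∧
    ∀ x y : α ⊕ β, Sum.elim (· ∈ I) (· ∈ J) x → Sum.elim (· ∈ I) (· ∈ J) y →
      (toGraph U).Reachable x y

/-- `M` is a perfect matching between `I` and `J`. -/
def IsMatching (M : BGraph α β) (I : Finset α) (J : Finset β) : Prop :=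
  (∀ e ∈ M, e.1 ∈ I ∧ e.2 ∈ J) ∧ (∀ a ∈ I, ∃! b : β, (a, b) ∈ M) ∧
    ∀ b ∈ J, ∃! a : α, (a, b) ∈ M

/-- Compatibility of two bipartite graphs. -/
def Compatible (G G' : BGraph α β) : Prop :=
  ∀ (I : Finset α) (J : Finset β) (M M' : BGraph α β),
    M ⊆ G → M' ⊆ G' → IsMatching M I J → IsMatching M' I J → M = M'

end BipartiteDefs

/-- The graph of an `(n,d)`-(semi)type. -/
def typeGraph {n d : ℕ} (T : Fin n → Finset (Fin d)) : BGraph (Fin n) (Fin d) :=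
  Finset.univ.filter fun e => e.2 ∈ T e.1

/-- A generic `(n,d)`-tropical oriented matroid. -/
structure GenericTOM (n d : ℕ) where
  types : Set (Fin n → Finset (Fin d))
  nonempty_coords : ∀ T ∈ types, ∀ i, (T i).Nonempty
  acyclic : ∀ T ∈ types, Acyclic (typeGraph T)
  boundary : ∀ j : Fin d, (fun _ => ({j} : Finset (Fin d))) ∈ types
  surrounding : ∀ T ∈ types, ∀ T' : Fin n → Finset (Fin d),
    (∀ i, (T' i).Nonempty) → typeGraph T' ⊆ typeGraph T → T' ∈ types
  compat : ∀ T ∈ types, ∀ T' ∈ types, Compatible (typeGraph T) (typeGraph T')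
  elimination : ∀ U ∈ types, ∀ V ∈ types, ∀ i : Fin n, ∃ W ∈ types,
    W i = U i ∪ V i ∧ ∀ i' : Fin n, i' ≠ i → W i' = U i' ∨ W i' = V i'

def tA : Fin 2 → Finset (Fin 4) := ![{0, 1, 2, 3}, {0}]
def tB : Fin 2 → Finset (Fin 4) := ![{1, 2, 3}, {0, 1}]
def tC : Fin 2 → Finset (Fin 4) := ![{2, 3}, {0, 1, 2}]
def tD : Fin 2 → Finset (Fin 4) := ![{3}, {0, 1, 2, 3}]

/-- The set of all `(2,4)`-types refining one of the four tree-types. -/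
def calT : Set (Fin 2 → Finset (Fin 4)) :=
  {T | (∀ i, (T i).Nonempty) ∧
    (typeGraph T ⊆ typeGraph tA ∨ typeGraph T ⊆ typeGraph tB ∨
      typeGraph T ⊆ typeGraph tC ∨ typeGraph T ⊆ typeGraph tD)}


/-! ### Auxiliary machinery -/

section Aux

instance fromEdgeSetAdjDec {V : Type*} [DecidableEq V] (s : Set (Sym2 V))
    [DecidablePred (· ∈ s)] : DecidableRel (SimpleGraph.fromEdgeSet s).Adj := fun _ _ =>
  decidable_of_iff _ (SimpleGraph.fromEdgeSet_adj s).symm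

instance toGraphAdjDec {α β : Type*} [DecidableEq α] [DecidableEq β] [Fintype α] [Fintype β]
    (G : BGraph α β) : DecidableRel (toGraph G).Adj := fun x y =>
  decidable_of_iff _ (SimpleGraph.fromRel_adj _ x y).symm

lemma acyclic_of_bridges {V : Type*} [Fintype V] [DecidableEq V] {G : SimpleGraph V}
    [DecidableRel G.Adj]
    (h : ∀ v w, G.Adj v w → ¬(G \ SimpleGraph.fromEdgeSet {s(v, w)}).Reachable v w) :
    G.IsAcyclic :=
  SimpleGraph.isAcyclic_iff_forall_adj_isBridge.2 fun v w hvw =>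
    SimpleGraph.isBridge_iff.2 (h v w hvw)

lemma isAcyclic_anti {V : Type*} {G H : SimpleGraph V} (h : G ≤ H) (hH : H.IsAcyclic) :
    G.IsAcyclic := fun _ c hc => hH (c.mapLe h) ((SimpleGraph.Walk.mapLe_isCycle h).2 hc)

lemma toGraph_mono {α β : Type*} [DecidableEq α] [DecidableEq β] {G G' : BGraph α β}
    (h : G ⊆ G') : toGraph G ≤ toGraph G' := by
  intro x y hxy
  rw [toGraph, SimpleGraph.fromRel_adj] at hxy ⊢
  obtain ⟨hne, hr⟩ := hxy
  refine ⟨hne, ?_⟩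
  rcases hr with ⟨a, b, h1, h2, h3⟩ | ⟨a, b, h1, h2, h3⟩
  · exact Or.inl ⟨a, b, h1, h2, h h3⟩
  · exact Or.inr ⟨a, b, h1, h2, h h3⟩

lemma acyclic_anti {α β : Type*} [DecidableEq α] [DecidableEq β] {G G' : BGraph α β}
    (h : G ⊆ G') (h' : Acyclic G') : Acyclic G :=
  isAcyclic_anti (toGraph_mono h) h'

lemma compatible_anti {α β : Type*} [DecidableEq α] [DecidableEq β] {G G' H H' : BGraph α β}
    (hH : H ⊆ G) (hH' : H' ⊆ G') (hc : Compatible G G') : Compatible H H' :=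
  fun I J M M' hM hM' => hc I J M M' (hM.trans hH) (hM'.trans hH')

lemma typeGraph_subset {n d : ℕ} {T S : Fin n → Finset (Fin d)} :
    typeGraph T ⊆ typeGraph S ↔ ∀ i, T i ⊆ S i := by
  constructor
  · intro h i j hj
    have := h (x := (i, j)) (by simp [typeGraph, hj])
    simpa [typeGraph] using this
  · intro h e he
    simp only [typeGraph, mem_filter, mem_univ, true_and] at he ⊢
    exact h e.1 he

/-- The no-swap condition that implies compatibility for `(2,4)`-graphs. -/
def SmallCompat (G G' : BGraph (Fin 2) (Fin 4)) : Prop :=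
  ∀ j j' : Fin 4, j ≠ j' → (0, j) ∈ G → (1, j') ∈ G → (0, j') ∈ G' → (1, j) ∈ G' → False

instance (G G' : BGraph (Fin 2) (Fin 4)) : Decidable (SmallCompat G G') := by
  unfold SmallCompat; infer_instance

lemma fin2_eq_of_ne {x y z : Fin 2} (hy : y ≠ x) (hz : z ≠ x) : y = z := by
  fin_cases x <;> fin_cases y <;> fin_cases z <;> simp_all

lemma compatible_of_smallCompat {G G' : BGraph (Fin 2) (Fin 4)} (h : SmallCompat G G') :
    Compatible G G' := by
  intro I J M M' hMG hMG' hM hM'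
  have key : ∀ N N' : BGraph (Fin 2) (Fin 4), IsMatching N I J → IsMatching N' I J →
      N ⊆ N' → N' ⊆ N := by
    rintro N N' hN hN' hsub ⟨a, b⟩ hab
    obtain ⟨ha, hb⟩ := hN'.1 _ hab
    obtain ⟨b0, hb0, _⟩ := hN.2.1 a ha
    obtain ⟨b1, hb1, hb1u⟩ := hN'.2.1 a ha
    have e1 : b0 = b1 := hb1u _ (hsub hb0)
    have e2 : b = b1 := hb1u _ hab
    rw [e2, ← e1]
    exact hb0
  suffices hsub : M ⊆ M' by exact le_antisymm hsub (key M M' hM hM' hsub)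
  rintro ⟨a, b⟩ hab
  obtain ⟨haI, hbJ⟩ := hM.1 _ hab
  obtain ⟨b', hb', hb'U⟩ := hM'.2.1 a haI
  by_cases hbb : b' = b
  · rw [← hbb]; exact hb'
  exfalso
  have hbb' : b ≠ b' := fun hh => hbb hh.symm
  obtain ⟨a2, ha2, ha2U⟩ := hM'.2.2 b hbJ
  have ha2a : a2 ≠ a := by
    intro hh; rw [hh] at ha2
    exact hbb (hb'U _ ha2).symm
  obtain ⟨a3, ha3, ha3U⟩ := hM.2.2 b' (hM'.1 _ hb').2
  have ha3a : a3 ≠ a := by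
    intro hh; rw [hh] at ha3
    obtain ⟨b0, hb0, hb0U⟩ := hM.2.1 a haI
    exact hbb ((hb0U _ ha3).trans (hb0U _ hab).symm)
  have ha32 : a3 = a2 := fin2_eq_of_ne ha3a ha2a
  rw [ha32] at ha3
  -- now : (a, b) ∈ M, (a2, b') ∈ M, (a, b') ∈ M', (a2, b) ∈ M'
  have ga1 : (a, b) ∈ G := hMG hab
  have ga2 : (a2, b') ∈ G := hMG ha3
  have gb1 : (a, b') ∈ G' := hMG' hb'
  have gb2 : (a2, b) ∈ G' := hMG' ha2
  fin_cases a <;> fin_cases a2 <;> simp_all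
  · exact h b b' hbb' ga1 ga2 gb1 gb2
  · exact h b' b (Ne.symm hbb') ga2 ga1 gb2 gb1

end Aux

section TreeData

def trees : Fin 4 → (Fin 2 → Finset (Fin 4)) := ![tA, tB, tC, tD]

lemma mem_calT {T : Fin 2 → Finset (Fin 4)} :
    T ∈ calT ↔ (∀ i, (T i).Nonempty) ∧ ∃ k : Fin 4, ∀ i, T i ⊆ trees k i := by
  show ((∀ i, (T i).Nonempty) ∧ _) ↔ _
  simp only [typeGraph_subset]
  refine and_congr_right fun _ => ?_
  constructor
  · rintro (h | h | h | h)
    · exact ⟨0, h⟩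
    · exact ⟨1, h⟩
    · exact ⟨2, h⟩
    · exact ⟨3, h⟩
  · rintro ⟨k, h⟩
    fin_cases k
    · exact Or.inl h
    · exact Or.inr (Or.inl h)
    · exact Or.inr (Or.inr (Or.inl h))
    · exact Or.inr (Or.inr (Or.inr h))

set_option maxHeartbeats 2000000 in
lemma trees_bridge : ∀ k : Fin 4, ∀ v w : Fin 2 ⊕ Fin 4,
    (toGraph (typeGraph (trees k))).Adj v w →
      ¬(toGraph (typeGraph (trees k)) \ SimpleGraph.fromEdgeSet {s(v, w)}).Reachable v w := by
  decide

lemma trees_acyclic (k : Fin 4) : Acyclic (typeGraph (trees k)) :=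
  acyclic_of_bridges (trees_bridge k)

lemma trees_smallCompat : ∀ k k' : Fin 4,
    SmallCompat (typeGraph (trees k)) (typeGraph (trees k')) := by decide

lemma trees_mono0 : ∀ k k' : Fin 4, k ≤ k' → trees k' 0 ⊆ trees k 0 := by decide

lemma trees_mono1 : ∀ k k' : Fin 4, k ≤ k' → trees k 1 ⊆ trees k' 1 := by decide

end TreeData

def theTOM : GenericTOM 2 4 where
  types := calT
  nonempty_coords := fun _ hT => hT.1
  acyclic := fun T hT => by
    obtain ⟨-, k, hk⟩ := mem_calT.1 hT
    exact acyclic_anti (typeGraph_subset.2 hk) (trees_acyclic k)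
  boundary := fun j => by
    rw [mem_calT]
    refine ⟨fun _ => ⟨j, mem_singleton_self j⟩, ?_⟩
    fin_cases j
    · exact ⟨0, by decide⟩
    · exact ⟨1, by decide⟩
    · exact ⟨2, by decide⟩
    · exact ⟨3, by decide⟩
  surrounding := fun T hT T' hne hsub => by
    obtain ⟨-, k, hk⟩ := mem_calT.1 hT
    exact mem_calT.2 ⟨hne, k, fun i => (typeGraph_subset.1 hsub i).trans (hk i)⟩
  compat := fun T hT T' hT' => by
    obtain ⟨-, k, hk⟩ := mem_calT.1 hT
    obtain ⟨-, k', hk'⟩ := mem_calT.1 hT'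
    exact compatible_anti (typeGraph_subset.2 hk) (typeGraph_subset.2 hk')
      (compatible_of_smallCompat (trees_smallCompat k k'))
  elimination := fun U hU V hV i => by
    obtain ⟨hUne, kU, hUk⟩ := mem_calT.1 hU
    obtain ⟨hVne, kV, hVk⟩ := mem_calT.1 hV
    fin_cases i
    · rcases le_total kU kV with hle | hle
      · refine ⟨![U 0 ∪ V 0, U 1], mem_calT.2 ⟨?_, kU, ?_⟩, rfl, ?_⟩
        · intro i; fin_cases i
          · exact (hUne 0).mono Finset.subset_union_left
          · exact hUne 1
        · intro i; fin_cases i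
          · exact Finset.union_subset (hUk 0) ((hVk 0).trans (trees_mono0 _ _ hle))
          · exact hUk 1
        · intro i' hi'
          fin_cases i'
          · exact absurd rfl hi'
          · exact Or.inl rfl
      · refine ⟨![U 0 ∪ V 0, V 1], mem_calT.2 ⟨?_, kV, ?_⟩, rfl, ?_⟩
        · intro i; fin_cases i
          · exact (hUne 0).mono Finset.subset_union_left
          · exact hVne 1
        · intro i; fin_cases i
          · exact Finset.union_subset ((hUk 0).trans (trees_mono0 _ _ hle)) (hVk 0)
          · exact hVk 1
        · intro i' hi'
          fin_cases i'
          · exact absurd rfl hi'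
          · exact Or.inr rfl
    · rcases le_total kU kV with hle | hle
      · refine ⟨![V 0, U 1 ∪ V 1], mem_calT.2 ⟨?_, kV, ?_⟩, rfl, ?_⟩
        · intro i; fin_cases i
          · exact hVne 0
          · exact (hUne 1).mono Finset.subset_union_left
        · intro i; fin_cases i
          · exact hVk 0
          · exact Finset.union_subset ((hUk 1).trans (trees_mono1 _ _ hle)) (hVk 1)
        · intro i' hi'
          fin_cases i'
          · exact Or.inr rfl
          · exact absurd rfl hi'
      · refine ⟨![U 0, U 1 ∪ V 1], mem_calT.2 ⟨?_, kU, ?_⟩, rfl, ?_⟩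
        · intro i; fin_cases i
          · exact hUne 0
          · exact (hUne 1).mono Finset.subset_union_left
        · intro i; fin_cases i
          · exact hUk 0
          · exact Finset.union_subset (hUk 1) ((hVk 1).trans (trees_mono1 _ _ hle))
        · intro i' hi'
          fin_cases i'
          · exact Or.inl rfl
          · exact absurd rfl hi'

def tX : Fin 2 → Finset (Fin 4) := ![{1, 3}, {0}]
def tY : Fin 2 → Finset (Fin 4) := ![{3}, {0, 2}]

theorem statement18 :
    (∃ 𝓜 : GenericTOM 2 4, 𝓜.types = calT) ∧
    tX ∈ calT ∧ tY ∈ calT ∧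
    (∀ i, (tX i).erase 1 = (tY i).erase 2) ∧
    (tX 0).erase 1 = ({3} : Finset (Fin 4)) ∧
    (tX 1).erase 1 = ({0} : Finset (Fin 4)) ∧
    (fun i => tX i ∪ tY i) ∉ calT := by
  refine ⟨⟨theTOM, rfl⟩, ?_, ?_, ?_, ?_, ?_, ?_⟩
  · exact mem_calT.2 ⟨by decide, 0, by decide⟩
  · exact mem_calT.2 ⟨by decide, 3, by decide⟩
  · decide
  · decide
  · decide
  · intro h
    obtain ⟨-, k, hk⟩ := mem_calT.1 h
    exact absurd ⟨k, hk⟩ (by decide : ¬∃ k : Fin 4, ∀ i, tX i ∪ tY i ⊆ trees k i)
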